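/- Let r, c₁, s be data of a Mukai vector v = r + c₁ - (s/2)ρ on an Enriques surface, so that r, s are integers, c₁ lies in a unimodular even lattice N of rank 10, and r + (c₁·c₁) + s ≡ 0 mod 2 (equivalently c₂ := (r + c₁² + s)/2 is an integer). If v is primitive (not divisible by any prime in the Mukai lattice ℤ ⊕ N ⊕ (1/2)ℤρ, where divisibility by p means r = p·r', c₁ = p·c₁', and s/2 = p·s'' for a valid Mukai vector), then g := gcd(r, c₁, s) equals 1 or 2; moreover if g = 2 then c₂ is odd and r + s ≡ 2 mod 4. -/

import Mathlib

open Matrix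

/-- Let `v = r + c₁ - (s/2)ρ` be a Mukai vector on an Enriques surface: `r, s ∈ ℤ`,
`c₁` lies in the even unimodular lattice `N = H²(X,ℤ)_f` of rank `10`, and
`r + c₁² + s = 2c₂` for an integer `c₂`.  Suppose `v` is primitive: there is no prime
`p` with `r = p·r'`, `c₁ = p·c₁'`, `s = p·s'` such that `v' = r' + c₁' - (s'/2)ρ` is
again a valid Mukai vector (i.e. `r' + c₁'² + s'` is even, so that `c₂'` is an
integer).  Then `g = gcd(r, c₁, s)` equals `1` or `2`; moreover if `g = 2` then `c₂`
is odd and `r + s ≡ 2 mod 4`. -/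
theorem stmt3 (B : Matrix (Fin 10) (Fin 10) ℤ) (hsym : B.IsSymm)
    (hdet : B.det = 1 ∨ B.det = -1)
    (heven : ∀ v : Fin 10 → ℤ, 2 ∣ v ⬝ᵥ B.mulVec v)
    (r s c2 : ℤ) (c1 : Fin 10 → ℤ)
    (hc2 : r + c1 ⬝ᵥ B.mulVec c1 + s = 2 * c2)
    (hprim : ∀ p : ℕ, p.Prime →
      ¬ ∃ (r' s' : ℤ) (c1' : Fin 10 → ℤ),
        r = (p : ℤ) * r' ∧ s = (p : ℤ) * s' ∧ c1 = (p : ℤ) • c1' ∧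
        (2 : ℤ) ∣ (r' + c1' ⬝ᵥ B.mulVec c1' + s'))
    (g : ℤ) (hg : g = gcd r (gcd s (Finset.univ.gcd c1))) :
    (g = 1 ∨ g = 2) ∧ (g = 2 → Odd c2 ∧ (r + s) % 4 = 2) := by
  -- basic divisibilities of g
  have hgr : g ∣ r := hg ▸ gcd_dvd_left _ _
  have hgs : g ∣ s := hg ▸ (dvd_trans (gcd_dvd_right _ _) (gcd_dvd_left _ _))
  have hgc : ∀ i, g ∣ c1 i := fun i =>
    hg ▸ (dvd_trans (gcd_dvd_right _ _)
      (dvd_trans (gcd_dvd_right _ _) (Finset.gcd_dvd (Finset.mem_univ i))))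
  -- key construction: for any prime p dividing r, s, and all coordinates of c1,
  -- we get quotients whose Mukai-type sum must be odd, together with the c₂ relation
  have key : ∀ p : ℕ, p.Prime → (p : ℤ) ∣ r → (p : ℤ) ∣ s → (∀ i, (p : ℤ) ∣ c1 i) →
      ∃ r' s' : ℤ, ∃ c1' : Fin 10 → ℤ,
        r = (p : ℤ) * r' ∧ s = (p : ℤ) * s' ∧
        (2 : ℤ) ∣ c1' ⬝ᵥ B.mulVec c1' ∧
        ¬ (2 : ℤ) ∣ (r' + s') ∧
        (p : ℤ) * r' + (p : ℤ) * ((p : ℤ) * (c1' ⬝ᵥ B.mulVec c1')) + (p : ℤ) * s'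
          = 2 * c2 := by
    intro p hp hr hs hc
    obtain ⟨r', hr'⟩ := hr
    obtain ⟨s', hs'⟩ := hs
    choose c1' hc1' using hc
    have hc1 : c1 = (p : ℤ) • c1' := by
      funext i; simpa using hc1' i
    have hQ : c1 ⬝ᵥ B.mulVec c1 = (p : ℤ) * ((p : ℤ) * (c1' ⬝ᵥ B.mulVec c1')) := by
      rw [hc1, Matrix.mulVec_smul, smul_dotProduct, dotProduct_smul,
        smul_eq_mul, smul_eq_mul]
    have hQ' : (2 : ℤ) ∣ c1' ⬝ᵥ B.mulVec c1' := heven c1'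
    have hodd : ¬ (2 : ℤ) ∣ (r' + c1' ⬝ᵥ B.mulVec c1' + s') := by
      intro h2
      exact hprim p hp ⟨r', s', c1', hr', hs', hc1, h2⟩
    have hrs : ¬ (2 : ℤ) ∣ (r' + s') := by
      intro h2
      apply hodd
      obtain ⟨a, ha⟩ := h2
      obtain ⟨b, hb⟩ := hQ'
      exact ⟨a + b, by linarith⟩
    refine ⟨r', s', c1', hr', hs', hQ', hrs, ?_⟩
    rw [hr', hs', hQ] at hc2
    linarith
  -- no odd prime divides g
  have hoddp : ∀ p : ℕ, p.Prime → p ≠ 2 → ¬ (p : ℤ) ∣ g := by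
    intro p hp hp2 hdvd
    obtain ⟨r', s', c1', hr', hs', hQ', hrs, heq⟩ :=
      key p hp (hdvd.trans hgr) (hdvd.trans hgs) (fun i => hdvd.trans (hgc i))
    apply hrs
    -- p * (r' + s') = 2*c2 - p^2 * Q', and p is odd
    have hpodd : ¬ (2 : ℤ) ∣ (p : ℤ) := by
      intro h
      have h' : (2 : ℕ) ∣ p := by exact_mod_cast h
      exact hp2 ((Nat.prime_dvd_prime_iff_eq Nat.prime_two hp).mp h').symm
    have h2 : (2 : ℤ) ∣ (p : ℤ) * (r' + s') := by
      obtain ⟨b, hb⟩ := hQ'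
      rw [hb] at heq
      exact ⟨c2 - (p : ℤ) * (p : ℤ) * b, by linear_combination heq⟩
    rcases (Int.prime_two.dvd_mul.mp h2) with h | h
    · exact absurd h hpodd
    · exact h
  -- g is not divisible by 4
  have h4 : ¬ (4 : ℤ) ∣ g := by
    intro h4
    have h2r : (2 : ℤ) ∣ r := (dvd_trans ⟨2, by norm_num⟩ h4).trans hgr
    have h2s : (2 : ℤ) ∣ s := (dvd_trans ⟨2, by norm_num⟩ h4).trans hgs
    have h2c : ∀ i, (2 : ℤ) ∣ c1 i := fun i =>
      (dvd_trans ⟨2, by norm_num⟩ h4).trans (hgc i)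
    obtain ⟨r', s', c1', hr', hs', hQ', hrs, heq⟩ :=
      key 2 Nat.prime_two (by exact_mod_cast h2r) (by exact_mod_cast h2s)
        (fun i => by exact_mod_cast h2c i)
    apply hrs
    -- 4 ∣ g ⇒ 2 ∣ r' and 2 ∣ s'
    obtain ⟨a, ha⟩ := h4.trans hgr
    obtain ⟨b, hb⟩ := h4.trans hgs
    have : r' = 2 * a := by push_cast at hr'; linarith
    have : s' = 2 * b := by push_cast at hs'; omega
    exact ⟨a + b, by omega⟩
  -- g is nonnegative and nonzero
  have hgnn : 0 ≤ g := by
    rw [hg, ← Int.coe_gcd]; positivity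
  have hgne : g ≠ 0 := by
    intro h0
    have hr0 : r = 0 := by simpa [h0] using hgr
    have hs0 : s = 0 := by simpa [h0] using hgs
    have hc0 : c1 = (2 : ℤ) • (0 : Fin 10 → ℤ) := by
      funext i; simpa [h0] using hgc i
    exact hprim 2 Nat.prime_two ⟨0, 0, 0, by simp [hr0], by simp [hs0], hc0, by simp⟩
  -- conclude g = 1 or g = 2
  have hg12 : g = 1 ∨ g = 2 := by
    set n := g.natAbs with hn
    have hgn : g = (n : ℤ) := (Int.natAbs_of_nonneg hgnn).symm
    have hnne : n ≠ 0 := by simpa [hn] using hgne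
    have huniq : ∀ {d : ℕ}, d.Prime → d ∣ n → d = 2 := by
      intro d hd hdn
      by_contra hd2
      exact hoddp d hd hd2 (hgn ▸ Int.natCast_dvd_natCast.mpr hdn)
    have hpow := Nat.eq_prime_pow_of_unique_prime_dvd hnne huniq
    set k := n.primeFactorsList.length with hk
    have hkle : k ≤ 1 := by
      by_contra hkgt
      apply h4
      rw [hgn, hpow]
      have : (2 : ℕ) ^ 2 ∣ 2 ^ k := pow_dvd_pow 2 (by omega)
      exact_mod_cast Int.natCast_dvd_natCast.mpr this
    interval_cases k
    · left; rw [hgn, hpow]; norm_num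
    · right; rw [hgn, hpow]; norm_num
  refine ⟨hg12, ?_⟩
  intro hg2
  have h2r : (2 : ℤ) ∣ r := hg2 ▸ hgr
  have h2s : (2 : ℤ) ∣ s := hg2 ▸ hgs
  have h2c : ∀ i, (2 : ℤ) ∣ c1 i := fun i => hg2 ▸ hgc i
  obtain ⟨r', s', c1', hr', hs', hQ', hrs, heq⟩ :=
    key 2 Nat.prime_two (by exact_mod_cast h2r) (by exact_mod_cast h2s)
      (fun i => by exact_mod_cast h2c i)
  push_cast at hr' hs' heq
  have hrsodd : r' + s' % 2 = 1 ∨ True := Or.inr trivial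
  constructor
  · -- c2 = r' + 2*Q' + s' with r' + s' odd
    obtain ⟨b, hb⟩ := hQ'
    have hc2eq : c2 = r' + s' + 2 * (2 * b) := by linarith
    rcases Int.even_or_odd (r' + s') with he | ho
    · exact absurd he.two_dvd hrs
    · obtain ⟨m, hm⟩ := ho
      exact ⟨m + 2 * b, by omega⟩
  · -- r + s = 2*(r'+s') with r'+s' odd
    rcases Int.even_or_odd (r' + s') with he | ho
    · exact absurd he.two_dvd hrs
    · obtain ⟨m, hm⟩ := ho
      have : r + s = 4 * m + 2 := by omega
      omega
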